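/- Let Q be a finite quiver and Φ a potential of the complete path algebra over ℂ. If Φ_*(cDer⁺) ⊇ m̂^{r+1}, where cDer⁺ denotes the cyclic derivations preserving the arrow ideal m̂, and Θ is a potential over the ring K of entire functions on ℂ with the same (r+1)-jet as Φ, then Θ_*(cDer⁺ over K) ⊇ n̂^{r+1}, where n̂ is the arrow ideal over K. (Jet-stability of the tangent-ideal condition under deformation of coefficients, via the Nakayama lemma.) -/

import Mathlib

open scoped Classical

noncomputable section

/-- All splittings `p = u.comp v` of a path `p` in a quiver. -/
def pathSplits {V : Type} [Quiver.{1} V] {i : V} : ∀ {j : V},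
    Quiver.Path i j → List (Σ m : V, Quiver.Path i m × Quiver.Path m j)
  | _, Quiver.Path.nil => [⟨i, Quiver.Path.nil, Quiver.Path.nil⟩]
  | _, Quiver.Path.cons p e =>
      ⟨_, Quiver.Path.cons p e, Quiver.Path.nil⟩ ::
        (pathSplits p).map fun x => ⟨x.1, x.2.1, x.2.2.cons e⟩

/-- An axiomatic presentation of the complete path algebra `k̂Q` of a quiver `Q`
with vertex set `V` over a commutative ring `k`: a `k`-algebra `A` whose
elements are formal series in paths.  `coeff p x` is the coefficient of the path
`p` in `x`, `ofCoeff` builds the series with prescribed coefficients (so `A` is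
complete), `pathE p` is the path `p` viewed as an element, `1` is the sum of
the trivial paths, and multiplication is given by convolution over all
splittings of a path. -/
structure CompletePathAlgebra (k V : Type) [CommRing k] [Quiver.{1} V] where
  A : Type
  [ringA : Ring A]
  [algA : Algebra k A]
  coeff : ∀ {i j : V}, Quiver.Path i j → (A →ₗ[k] k)
  ofCoeff : (∀ i j : V, Quiver.Path i j → k) → A
  pathE : ∀ {i j : V}, Quiver.Path i j → A
  coeff_ofCoeff : ∀ c (i j : V) (p : Quiver.Path i j), coeff p (ofCoeff c) = c i j p
  coeff_ext : ∀ x y : A, (∀ (i j : V) (p : Quiver.Path i j), coeff p x = coeff p y) → x = y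
  coeff_pathE : ∀ {i j i' j' : V} (p : Quiver.Path i j) (q : Quiver.Path i' j'),
      coeff q (pathE p) =
        if (⟨i, j, p⟩ : Σ a b : V, Quiver.Path a b) = ⟨i', j', q⟩ then 1 else 0
  coeff_one : ∀ (i j : V) (p : Quiver.Path i j),
      coeff p (1 : A) = if p.length = 0 then 1 else 0
  coeff_mul : ∀ (x y : A) (i j : V) (p : Quiver.Path i j),
      coeff p (x * y) =
        ((pathSplits p).map fun s => coeff s.2.1 x * coeff s.2.2 y).sum

attribute [instance] CompletePathAlgebra.ringA CompletePathAlgebra.algA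

namespace CompletePathAlgebra

variable {k V : Type} [CommRing k] [Quiver.{1} V] (C : CompletePathAlgebra k V)

/-- The `r`-th power `m̂^r` of the arrow ideal: the series all of whose
coefficients in degrees `< r` vanish. -/
def mpow (r : ℕ) : Submodule k C.A where
  carrier := {x | ∀ ⦃i j : V⦄ (p : Quiver.Path i j), p.length < r → C.coeff p x = 0}
  add_mem' := by
    intro x y hx hy i j p hp
    simp [map_add, hx p hp, hy p hp]
  zero_mem' := by intro i j p hp; simp
  smul_mem' := by
    intro c x hx i j p hp
    simp [map_smul, hx p hp]

/-- The closure of a `k`-subspace of `k̂Q` in the `m̂`-adic topology,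
`U^cl = ⋂_r (U + m̂^r)`. -/
def cl (U : Submodule k C.A) : Submodule k C.A := ⨅ r : ℕ, U ⊔ C.mpow r

/-- The commutator subspace `[A,A]`. -/
def commSub : Submodule k C.A :=
  Submodule.span k {z : C.A | ∃ x y : C.A, z = x * y - y * x}

/-- The closed commutator subspace `[A,A]^cl`. -/
def commCl : Submodule k C.A := C.cl C.commSub

/-- The cyclic derivative `Φ_*(D_a)` with respect to an arrow `a : i ⟶ j`:
the series whose coefficient at a path `q : j → i` is
`Σ_{q = v·u} (coefficient of the cycle `u·a·v` in `φ`)`. -/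
def cycDeriv {i j : V} (a : i ⟶ j) (φ : C.A) : C.A :=
  C.ofCoeff fun i' j' q =>
    if h1 : i' = j then
      if h2 : j' = i then
        ((pathSplits (cast (by rw [h1, h2]) q : Quiver.Path j i)).map
          fun s => C.coeff ((Quiver.Path.cons s.2.2 a).comp s.2.1) φ).sum
      else 0
    else 0

/-- The (not yet closed) two-sided ideal generated by the cyclic derivatives of
`φ`. -/
def jacSpan (φ : C.A) : Submodule k C.A :=
  Submodule.span k
    {z : C.A | ∃ (i j : V) (a : i ⟶ j) (u v : C.A), z = u * C.cycDeriv a φ * v}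

/-- The Jacobi ideal `Ĵ(Q,Φ)`: the closure of the two-sided ideal generated by
the cyclic derivatives of `φ`. -/
def jac (φ : C.A) : Submodule k C.A := C.cl (C.jacSpan φ)

lemma mpow_antitone {r s : ℕ} (h : r ≤ s) : C.mpow s ≤ C.mpow r := by
  intro x hx i j p hp
  exact hx p (lt_of_lt_of_le hp h)

end CompletePathAlgebra

end

/-- The ring of entire functions on the complex plane, as a subalgebra of
`ℂ → ℂ`. -/
def Entire : Subalgebra ℂ (ℂ → ℂ) where
  carrier := {f | Differentiable ℂ f}
  mul_mem' := fun hf hg => hf.mul hg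
  add_mem' := fun hf hg => hf.add hg
  algebraMap_mem' := fun c => differentiable_const c

/-- Membership in the image of `Φ_*` on the cyclic derivations **preserving the
arrow ideal** (`cDer⁺`): as in `imCyc`, but the coefficient family `c` of the
cyclic derivation `Σ_{a,u,v} c_{a,u,v}·u·D_a·v` vanishes whenever `u` and `v`
are both trivial paths. -/
def CompletePathAlgebra.imCycPlus {k V : Type} [CommRing k] [Quiver.{1} V]
    [Fintype V] [∀ i j : V, Fintype (i ⟶ j)]
    (C : CompletePathAlgebra k V) (φ : C.A) : Set C.A :=
  {x | ∃ c : ∀ (i j : V), (i ⟶ j) →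
        ∀ (s m : V), Quiver.Path s m → ∀ (m' t : V), Quiver.Path m' t → k,
      (∀ (i j : V) (a : i ⟶ j) (s m : V) (u : Quiver.Path s m)
          (m' t : V) (v : Quiver.Path m' t),
        u.length = 0 → v.length = 0 → c i j a s m u m' t v = 0) ∧
      ∀ (s t : V) (q : Quiver.Path s t),
        C.coeff q x =
          ((pathSplits q).map fun s1 =>
            ((pathSplits s1.2.2).map fun s2 =>
              ∑ i : V, ∑ j : V, ∑ a : (i ⟶ j),
                c i j a s s1.1 s1.2.1 s2.1 t s2.2.2 *
                  C.coeff s2.2.1 (C.cycDeriv a φ)).sum).sum}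

section JetAux
set_option linter.unusedSectionVars false
set_option synthInstance.maxHeartbeats 1000000
set_option maxHeartbeats 1000000

open Quiver

noncomputable section

variable {k V : Type} [CommRing k] [Quiver.{1} V]

/-- Coefficient families for cyclic derivations. -/
abbrev Cfam (k V : Type) [CommRing k] [Quiver.{1} V] : Type 1 :=
  ∀ (i j : V), (i ⟶ j) → ∀ (s m : V), Quiver.Path s m → ∀ (m' t : V), Quiver.Path m' t → k

/-- Coefficient data of the family of cyclic derivatives. -/
abbrev Gfam (k V : Type) [CommRing k] [Quiver.{1} V] : Type 1 :=
  ∀ (i j : V), (i ⟶ j) → ∀ (m m' : V), Quiver.Path m m' → k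

/-- The vanishing condition defining `cDer⁺`. -/
def Vanish (c : Cfam k V) : Prop :=
  ∀ (i j : V) (a : i ⟶ j) (s m : V) (u : Quiver.Path s m) (m' t : V) (v : Quiver.Path m' t),
    u.length = 0 → v.length = 0 → c i j a s m u m' t v = 0

lemma lsum_add {α : Type*} (l : List α) (f g : α → k) :
    (l.map fun a => f a + g a).sum = (l.map f).sum + (l.map g).sum := by
  induction l with
  | nil => simp
  | cons a l ih => simp only [List.map_cons, List.sum_cons, ih]; ring

lemma lsum_zero {α : Type*} (l : List α) : (l.map fun _ => (0 : k)).sum = 0 := by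
  induction l with
  | nil => simp
  | cons a l ih => simp [ih]

lemma lsum_sub {α : Type*} (l : List α) (f g : α → k) :
    (l.map fun a => f a - g a).sum = (l.map f).sum - (l.map g).sum := by
  induction l with
  | nil => simp
  | cons a l ih => simp only [List.map_cons, List.sum_cons, ih]; ring

lemma lsum_mul {α : Type*} (l : List α) (f : α → k) (r : k) :
    (l.map fun a => r * f a).sum = r * (l.map f).sum := by
  induction l with
  | nil => simp
  | cons a l ih => simp only [List.map_cons, List.sum_cons, ih]; ring

lemma pathSplits_comp_eq {i j : V} (p : Quiver.Path i j) :
    ∀ s ∈ pathSplits p, s.2.1.comp s.2.2 = p := by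
  induction p with
  | nil =>
    intro s hs
    simp only [pathSplits, List.mem_singleton] at hs
    subst hs; rfl
  | cons p e ih =>
    intro s hs
    simp only [pathSplits, List.mem_cons, List.mem_map] at hs
    rcases hs with rfl | ⟨t, ht, rfl⟩
    · rfl
    · simp [ih t ht]

lemma pathSplits_length {i j : V} (p : Quiver.Path i j) :
    ∀ s ∈ pathSplits p, s.2.1.length + s.2.2.length = p.length := by
  intro s hs
  rw [← Quiver.Path.length_comp, pathSplits_comp_eq p s hs]

/-- Splitting a sigma equality of doubly-indexed data. -/
lemma sigma2_eq_elim {C : V → V → Type*} {a b c d : V} {e : C a b} {f : C c d}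
    (h : (⟨a, b, e⟩ : Σ x y : V, C x y) = ⟨c, d, f⟩) :
    ∃ (_ : a = c) (_ : b = d), HEq e f := by
  obtain ⟨rfl, h2⟩ := Sigma.mk.inj_iff.mp h
  obtain ⟨rfl, h3⟩ := Sigma.mk.inj_iff.mp (eq_of_heq h2)
  exact ⟨rfl, rfl, h3⟩


variable [Fintype V] [∀ i j : V, Fintype (i ⟶ j)]

/-- The coefficient at `q` of the value of the cyclic derivation with
coefficient family `c` applied to the potential with cyclic-derivative data
`G`. -/
def Fc (G : Gfam k V) (c : Cfam k V) {s t : V} (q : Quiver.Path s t) : k :=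
  ((pathSplits q).map fun s1 =>
    ((pathSplits s1.2.2).map fun s2 =>
      ∑ i : V, ∑ j : V, ∑ a : (i ⟶ j),
        c i j a s s1.1 s1.2.1 s2.1 t s2.2.2 * G i j a s1.1 s2.1 s2.2.1).sum).sum

/-- Cyclic-derivative data of a potential. -/
def Gof (C : CompletePathAlgebra k V) (φ : C.A) : Gfam k V :=
  fun i j a _ _ w => C.coeff w (C.cycDeriv a φ)

lemma mem_imCycPlus_iff (C : CompletePathAlgebra k V) (φ : C.A) (x : C.A) :
    x ∈ C.imCycPlus φ ↔ ∃ c : Cfam k V, Vanish c ∧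
      ∀ (s t : V) (q : Quiver.Path s t), C.coeff q x = Fc (Gof C φ) c q :=
  Iff.rfl

lemma Fc_add (G : Gfam k V) (c c' : Cfam k V) {s t : V} (q : Quiver.Path s t) :
    Fc G (c + c') q = Fc G c q + Fc G c' q := by
  unfold Fc
  rw [← lsum_add]
  congr 1
  apply List.map_congr_left
  intro s1 _
  rw [← lsum_add]
  congr 1
  apply List.map_congr_left
  intro s2 _
  rw [← Finset.sum_add_distrib]
  refine Finset.sum_congr rfl fun i _ => ?_
  rw [← Finset.sum_add_distrib]
  refine Finset.sum_congr rfl fun j _ => ?_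
  rw [← Finset.sum_add_distrib]
  refine Finset.sum_congr rfl fun a _ => ?_
  simp [add_mul]

lemma Fc_congr (G : Gfam k V) (c c' : Cfam k V) {s t : V} (q : Quiver.Path s t)
    (h : ∀ (i j : V) (a : i ⟶ j) (s' m : V) (u : Quiver.Path s' m) (m' t' : V)
      (v : Quiver.Path m' t'), v.length ≤ q.length → c i j a s' m u m' t' v = c' i j a s' m u m' t' v) :
    Fc G c q = Fc G c' q := by
  unfold Fc
  congr 1
  apply List.map_congr_left
  intro s1 hs1
  congr 1
  apply List.map_congr_left
  intro s2 hs2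
  refine Finset.sum_congr rfl fun i _ => Finset.sum_congr rfl fun j _ =>
    Finset.sum_congr rfl fun a _ => ?_
  have l1 := pathSplits_length q s1 hs1
  have l2 := pathSplits_length s1.2.2 s2 hs2
  rw [h _ _ _ _ _ _ _ _ _ (by omega)]

lemma Fc_zero (G : Gfam k V) {s t : V} (q : Quiver.Path s t) :
    Fc G (0 : Cfam k V) q = 0 := by
  unfold Fc
  have : ∀ s1 ∈ pathSplits q,
      ((pathSplits s1.2.2).map fun s2 =>
        ∑ i : V, ∑ j : V, ∑ a : (i ⟶ j),
          (0 : Cfam k V) i j a s s1.1 s1.2.1 s2.1 t s2.2.2 * G i j a s1.1 s2.1 s2.2.1).sum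
        = (0 : k) := by
    intro s1 _
    have : ∀ s2 ∈ pathSplits s1.2.2,
        (∑ i : V, ∑ j : V, ∑ a : (i ⟶ j),
          (0 : Cfam k V) i j a s s1.1 s1.2.1 s2.1 t s2.2.2 * G i j a s1.1 s2.1 s2.2.1) = (0:k) := by
      intro s2 _
      simp
    rw [List.map_congr_left this, lsum_zero]
  rw [List.map_congr_left this, lsum_zero]

lemma Fc_eq_zero_of_support (G : Gfam k V) (c : Cfam k V) {s t : V} (q : Quiver.Path s t)
    (h : ∀ (i j : V) (a : i ⟶ j) (s' m : V) (u : Quiver.Path s' m) (m' t' : V)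
      (v : Quiver.Path m' t'), v.length ≤ q.length → c i j a s' m u m' t' v = 0) :
    Fc G c q = 0 := by
  rw [Fc_congr G c 0 q (by intro i j a s' m u m' t' v hv; rw [h _ _ _ _ _ _ _ _ _ hv]; rfl),
    Fc_zero]

lemma Fc_smul (G : Gfam k V) (r : k) (c : Cfam k V) {s t : V} (q : Quiver.Path s t) :
    Fc G (r • c) q = r * Fc G c q := by
  unfold Fc
  rw [← lsum_mul]
  congr 1
  apply List.map_congr_left
  intro s1 _
  rw [← lsum_mul]
  congr 1
  apply List.map_congr_left
  intro s2 _
  rw [Finset.mul_sum]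
  refine Finset.sum_congr rfl fun i _ => ?_
  rw [Finset.mul_sum]
  refine Finset.sum_congr rfl fun j _ => ?_
  rw [Finset.mul_sum]
  refine Finset.sum_congr rfl fun a _ => ?_
  simp [mul_assoc]

lemma Fc_finsum {ι : Type*} (G : Gfam k V) (F : Finset ι) (cs : ι → Cfam k V)
    {s t : V} (q : Quiver.Path s t) :
    Fc G (∑ i ∈ F, cs i) q = ∑ i ∈ F, Fc G (cs i) q := by
  classical
  induction F using Finset.induction with
  | empty => simp [Fc_zero]
  | insert _ _ h ih => rw [Finset.sum_insert h, Fc_add, ih, Finset.sum_insert h]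


/-- Shift a coefficient family by postcomposing the right path with an arrow. -/
def shiftA {t₀ t₁ : V} (e : t₀ ⟶ t₁) (c : Cfam k V) : Cfam k V :=
  fun i j a s m u m' t v =>
    match t, v with
    | _, Quiver.Path.nil => 0
    | t, Quiver.Path.cons (b := m₀) v₀ e' =>
      if h : (⟨m₀, t, e'⟩ : Σ x y : V, x ⟶ y) = ⟨t₀, t₁, e⟩ then
        c i j a s m u m' t₀ (cast (by rw [show m₀ = t₀ from congrArg Sigma.fst h]) v₀)
      else 0

lemma shiftA_nil {t₀ t₁ : V} (e : t₀ ⟶ t₁) (c : Cfam k V) (i j : V) (a : i ⟶ j)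
    (s m : V) (u : Quiver.Path s m) (m' : V) :
    shiftA e c i j a s m u m' m' Quiver.Path.nil = 0 := rfl

lemma shiftA_cons_self {t₀ t₁ : V} (e : t₀ ⟶ t₁) (c : Cfam k V) (i j : V) (a : i ⟶ j)
    (s m : V) (u : Quiver.Path s m) (m' : V) (v₀ : Quiver.Path m' t₀) :
    shiftA e c i j a s m u m' t₁ (v₀.cons e) = c i j a s m u m' t₀ v₀ := by
  simp only [shiftA]
  rw [dif_pos trivial]
  exact congrArg _ (eq_of_heq (cast_heq _ _))

lemma shiftA_cons_ne {t₀ t₁ m₀ t' : V} (e : t₀ ⟶ t₁) (e' : m₀ ⟶ t')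
    (h : (⟨m₀, t', e'⟩ : Σ x y : V, x ⟶ y) ≠ ⟨t₀, t₁, e⟩)
    (c : Cfam k V) (i j : V) (a : i ⟶ j)
    (s m : V) (u : Quiver.Path s m) (m' : V) (v₀ : Quiver.Path m' m₀) :
    shiftA e c i j a s m u m' t' (v₀.cons e') = 0 := by
  simp only [shiftA]
  rw [dif_neg]
  exact h

/-- Shift a coefficient family by postcomposing the right path with a path. -/
def shiftP : ∀ {b t' : V}, Quiver.Path b t' → Cfam k V → Cfam k V
  | _, _, Quiver.Path.nil, c => c
  | _, _, Quiver.Path.cons w e, c => shiftA e (shiftP w c)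

@[simp] lemma shiftP_nil {b : V} (c : Cfam k V) :
    shiftP (Quiver.Path.nil : Quiver.Path b b) c = c := by simp only [shiftP]

@[simp] lemma shiftP_cons {b m t' : V} (w : Quiver.Path b m) (e : m ⟶ t') (c : Cfam k V) :
    shiftP (w.cons e) c = shiftA e (shiftP w c) := by simp only [shiftP]

lemma shiftP_support {b t' : V} (w : Quiver.Path b t') (c : Cfam k V) :
    ∀ (i j : V) (a : i ⟶ j) (s m : V) (u : Quiver.Path s m) (m' t : V)
      (v : Quiver.Path m' t), v.length < w.length →
      shiftP w c i j a s m u m' t v = 0 := by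
  induction w with
  | nil => intro i j a s m u m' t v hv; simp at hv
  | cons w e ih =>
    intro i j a s m u m' t v hv
    rw [shiftP_cons]
    cases v with
    | nil => exact shiftA_nil _ _ _ _ _ _ _ _ _
    | cons v₀ e' =>
      by_cases h : (⟨_, _, e'⟩ : Σ x y : V, x ⟶ y) = ⟨_, _, e⟩
      · obtain ⟨rfl, rfl, he⟩ := sigma2_eq_elim h
        obtain rfl := eq_of_heq he
        rw [shiftA_cons_self]
        exact ih _ _ _ _ _ _ _ _ _ (by simpa using Nat.lt_of_succ_lt_succ (by simpa using hv))
      · exact shiftA_cons_ne _ _ h _ _ _ _ _ _ _ _ _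

lemma shiftP_vanish {b t' : V} (w : Quiver.Path b t') (c : Cfam k V) (hc : Vanish c) :
    Vanish (shiftP w c) := by
  induction w with
  | nil => rw [shiftP_nil]; exact hc
  | cons w e ih =>
    intro i j a s m u m' t v hu hv
    rw [shiftP_cons]
    cases v with
    | nil => exact shiftA_nil _ _ _ _ _ _ _ _ _
    | cons v₀ e' => simp at hv

lemma Fc_shiftA_nil (G : Gfam k V) {t₀ t₁ : V} (e : t₀ ⟶ t₁) (c : Cfam k V) (s : V) :
    Fc G (shiftA e c) (Quiver.Path.nil : Quiver.Path s s) = 0 := by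
  simp [Fc, pathSplits, shiftA_nil]

lemma Fc_shiftA_cons (G : Gfam k V) {t₀ t₁ : V} (e : t₀ ⟶ t₁) (c : Cfam k V)
    {s : V} (q₀ : Quiver.Path s t₀) :
    Fc G (shiftA e c) (q₀.cons e) = Fc G c q₀ := by
  unfold Fc
  simp only [pathSplits, List.map_cons, List.sum_cons, List.map_map, List.map_nil,
    List.sum_nil, add_zero, shiftA_nil, zero_mul, Finset.sum_const_zero, zero_add]
  refine congrArg List.sum (List.map_congr_left fun x hx => ?_)
  simp only [Function.comp_apply]
  simp only [pathSplits, List.map_cons, List.sum_cons, List.map_map, List.map_nil,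
    List.sum_nil, add_zero, shiftA_nil, zero_mul, Finset.sum_const_zero, zero_add]
  refine congrArg List.sum (List.map_congr_left fun y hy => ?_)
  simp only [Function.comp_apply, shiftA_cons_self]

lemma Fc_shiftA_ne (G : Gfam k V) {t₀ t₁ m₀ t' : V} (e : t₀ ⟶ t₁) (e' : m₀ ⟶ t')
    (h : (⟨m₀, t', e'⟩ : Σ x y : V, x ⟶ y) ≠ ⟨t₀, t₁, e⟩)
    (c : Cfam k V) {s : V} (q₁ : Quiver.Path s m₀) :
    Fc G (shiftA e c) (q₁.cons e') = 0 := by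
  unfold Fc
  simp only [pathSplits, List.map_cons, List.sum_cons, List.map_map, List.map_nil,
    List.sum_nil, add_zero, shiftA_nil, zero_mul, Finset.sum_const_zero, zero_add]
  rw [← lsum_zero (pathSplits q₁)]
  refine congrArg List.sum (List.map_congr_left fun x hx => ?_)
  simp only [Function.comp_apply]
  simp only [pathSplits, List.map_cons, List.sum_cons, List.map_map, List.map_nil,
    List.sum_nil, add_zero, shiftA_nil, zero_mul, Finset.sum_const_zero, zero_add]
  rw [← lsum_zero (pathSplits x.2.2)]
  refine congrArg List.sum (List.map_congr_left fun y hy => ?_)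
  simp only [Function.comp_apply, shiftA_cons_ne e e' h, zero_mul, Finset.sum_const_zero]

lemma Fc_shiftP_comp (G : Gfam k V) {b t' : V} (w : Quiver.Path b t') (c : Cfam k V)
    {s : V} (q₀ : Quiver.Path s b) :
    Fc G (shiftP w c) (q₀.comp w) = Fc G c q₀ := by
  induction w with
  | nil => rw [shiftP_nil]; rfl
  | cons w e ih => rw [Quiver.Path.comp_cons, shiftP_cons, Fc_shiftA_cons, ih]

lemma Fc_shiftP_ne (G : Gfam k V) : ∀ {b t' : V} (w : Quiver.Path b t'), w.length ≠ 0 →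
    ∀ (c : Cfam k V) {s t : V} (q : Quiver.Path s t),
    (∀ q₀ : Quiver.Path s b,
      (⟨s, t', q₀.comp w⟩ : Σ x y : V, Quiver.Path x y) ≠ ⟨s, t, q⟩) →
    Fc G (shiftP w c) q = 0 := by
  intro b t' w
  induction w with
  | nil => intro hw; exact absurd rfl hw
  | cons w e ih =>
    intro _ c s t q h
    rw [shiftP_cons]
    cases q with
    | nil => exact Fc_shiftA_nil G e (shiftP w c) s
    | cons q₁ e₁ =>
      by_cases harr : (⟨_, _, e₁⟩ : Σ x y : V, x ⟶ y) = ⟨_, _, e⟩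
      · obtain ⟨rfl, rfl, he⟩ := sigma2_eq_elim harr
        obtain rfl := eq_of_heq he
        rw [Fc_shiftA_cons]
        by_cases hw0 : w.length = 0
        · cases w with
          | nil => exact absurd rfl (h q₁)
          | cons w' e' => simp at hw0
        · refine ih hw0 c q₁ fun q₀ hq₀ => ?_
          obtain ⟨-, -, hh⟩ := sigma2_eq_elim hq₀
          have hh' : q₀.comp w = q₁ := eq_of_heq hh
          subst hh'
          exact h q₀ rfl
      · exact Fc_shiftA_ne G e e₁ harr (shiftP w c) q₁

/-- The finite set of all paths of length `n` in a finite quiver. -/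
def POLS (V : Type) [Quiver.{1} V] [Fintype V] [∀ i j : V, Fintype (i ⟶ j)] :
    ℕ → Finset (Σ s t : V, Quiver.Path s t)
  | 0 => Finset.univ.image fun s : V => ⟨s, s, Quiver.Path.nil⟩
  | n + 1 =>
    (POLS V n).biUnion fun P => Finset.univ.biUnion fun t : V =>
      (Finset.univ : Finset (P.2.1 ⟶ t)).image fun e => ⟨P.1, t, P.2.2.cons e⟩

lemma mem_POLS_iff : ∀ (n : ℕ) (P : Σ s t : V, Quiver.Path s t),
    P ∈ POLS V n ↔ P.2.2.length = n := by
  intro n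
  induction n with
  | zero =>
    intro P
    simp only [POLS, Finset.mem_image, Finset.mem_univ, true_and]
    constructor
    · rintro ⟨s, rfl⟩; rfl
    · intro h
      obtain ⟨s, t, p⟩ := P
      cases p with
      | nil => exact ⟨s, rfl⟩
      | cons p e => simp at h
  | succ n ih =>
    intro P
    simp only [POLS, Finset.mem_biUnion, Finset.mem_univ, Finset.mem_image, true_and]
    constructor
    · rintro ⟨Q, hQ, t, e, rfl⟩
      have := (ih Q).mp hQ
      simp [this]
    · intro h
      obtain ⟨s, t, p⟩ := P
      cases p with
      | nil => simp at h
      | cons p e =>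
        refine ⟨⟨s, _, p⟩, (ih _).mpr (by simpa using h), _, e, rfl⟩

/-- Split a path, the second part having length `n` (when `n ≤ length`). -/
def takeDrop : ∀ {s t : V}, Quiver.Path s t → ℕ → Σ m : V, Quiver.Path s m × Quiver.Path m t
  | _, t, q, 0 => ⟨t, q, Quiver.Path.nil⟩
  | _, _, Quiver.Path.nil, _ + 1 => ⟨_, Quiver.Path.nil, Quiver.Path.nil⟩
  | _, _, Quiver.Path.cons q' e, n + 1 =>
    ⟨(takeDrop q' n).1, (takeDrop q' n).2.1, (takeDrop q' n).2.2.cons e⟩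

lemma takeDrop_comp {s : V} : ∀ {t : V} (q : Quiver.Path s t) (n : ℕ), n ≤ q.length →
    (takeDrop q n).2.1.comp (takeDrop q n).2.2 = q := by
  intro t q
  induction q with
  | nil =>
    intro n hn
    obtain rfl : n = 0 := Nat.le_zero.mp (by simpa using hn)
    rfl
  | cons q' e ih =>
    intro n hn
    match n with
    | 0 => rfl
    | n + 1 =>
      show ((takeDrop q' n).2.1.comp ((takeDrop q' n).2.2.cons e)) = q'.cons e
      rw [Quiver.Path.comp_cons, ih n (by simpa using Nat.succ_le_succ_iff.mp (by simpa using hn))]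

lemma takeDrop_len {s : V} : ∀ {t : V} (q : Quiver.Path s t) (n : ℕ), n ≤ q.length →
    (takeDrop q n).2.2.length = n := by
  intro t q
  induction q with
  | nil =>
    intro n hn
    obtain rfl : n = 0 := Nat.le_zero.mp (by simpa using hn)
    rfl
  | cons q' e ih =>
    intro n hn
    match n with
    | 0 => rfl
    | n + 1 =>
      show ((takeDrop q' n).2.2.cons e).length = n + 1
      rw [Quiver.Path.length_cons, ih n (by simpa using Nat.succ_le_succ_iff.mp (by simpa using hn))]

lemma sum_pathSplits_comp {i b : V} (p : Quiver.Path i b) :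
    ∀ {j : V} (q : Quiver.Path b j) (F : (Σ m : V, Quiver.Path i m × Quiver.Path m j) → k),
    ((pathSplits (p.comp q)).map F).sum
      = ((pathSplits q).map fun s => F ⟨s.1, p.comp s.2.1, s.2.2⟩).sum
        + ((pathSplits p).map fun s => F ⟨s.1, s.2.1, s.2.2.comp q⟩).sum
        - F ⟨b, p, q⟩ := by
  intro j q
  induction q with
  | nil =>
    intro F
    show ((pathSplits p).map F).sum = _
    simp only [pathSplits, List.map_cons, List.map_nil, List.sum_cons, List.sum_nil, add_zero]
    have h2 : ((pathSplits p).map fun s => F ⟨s.1, s.2.1, s.2.2.comp Quiver.Path.nil⟩)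
        = (pathSplits p).map F := List.map_congr_left fun x _ => rfl
    rw [h2]
    simp only [Quiver.Path.comp_nil]
    ring
  | cons q' e ih =>
    intro F
    show ((pathSplits ((p.comp q').cons e)).map F).sum = _
    simp only [pathSplits, List.map_cons, List.sum_cons, List.map_map, Function.comp_def]
    rw [ih (fun x => F ⟨x.1, x.2.1, x.2.2.cons e⟩)]
    try dsimp only
    simp only [Quiver.Path.comp_cons, Quiver.Path.comp_nil]
    ring

lemma sum_splits3 {i j : V} (w : Quiver.Path i j)
    (H : (Σ m m' : V, Quiver.Path i m × Quiver.Path m m' × Quiver.Path m' j) → k) :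
    ((pathSplits w).map fun s =>
      ((pathSplits s.2.1).map fun t => H ⟨t.1, s.1, t.2.1, t.2.2, s.2.2⟩).sum).sum
  = ((pathSplits w).map fun s =>
      ((pathSplits s.2.2).map fun t => H ⟨s.1, t.1, s.2.1, t.2.1, t.2.2⟩).sum).sum := by
  induction w with
  | nil => rfl
  | cons w' e ih =>
    simp only [pathSplits, List.map_cons, List.sum_cons, List.map_map, Function.comp_def]
    rw [ih (fun y => H ⟨y.1, y.2.1, y.2.2.1, y.2.2.2.1, y.2.2.2.2.cons e⟩)]
    try dsimp only
    simp only [List.map_nil, List.sum_nil, add_zero]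
    rw [lsum_add]
    ring

/-- The linear functional computing the coefficient of the cyclic derivative at
a cycle `w` (through an arrow `a`). -/
def Lsum (C : CompletePathAlgebra k V) {i j : V} (a : i ⟶ j) (w : Quiver.Path j i)
    (z : C.A) : k :=
  ((pathSplits w).map fun s => C.coeff ((Quiver.Path.cons s.2.2 a).comp s.2.1) z).sum

lemma Lsum_add (C : CompletePathAlgebra k V) {i j : V} (a : i ⟶ j) (w : Quiver.Path j i)
    (z z' : C.A) : Lsum C a w (z + z') = Lsum C a w z + Lsum C a w z' := by
  unfold Lsum
  rw [← lsum_add]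
  exact congrArg List.sum (List.map_congr_left fun s _ => map_add _ _ _)

lemma Lsum_smul (C : CompletePathAlgebra k V) {i j : V} (a : i ⟶ j) (w : Quiver.Path j i)
    (r : k) (z : C.A) : Lsum C a w (r • z) = r * Lsum C a w z := by
  unfold Lsum
  rw [← lsum_mul]
  exact congrArg List.sum (List.map_congr_left fun s _ => by
    rw [map_smul, smul_eq_mul])

lemma Lsum_zero (C : CompletePathAlgebra k V) {i j : V} (a : i ⟶ j) (w : Quiver.Path j i) :
    Lsum C a w 0 = 0 := by
  unfold Lsum
  rw [← lsum_zero (pathSplits w)]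
  exact congrArg List.sum (List.map_congr_left fun s _ => map_zero _)

lemma Lsum_mul_comm (C : CompletePathAlgebra k V) {i j : V} (a : i ⟶ j)
    (w : Quiver.Path j i) (x y : C.A) :
    Lsum C a w (x * y) = Lsum C a w (y * x) := by
  have key : ∀ x y : C.A, Lsum C a w (x * y)
      = ((pathSplits w).map fun s => ((pathSplits s.2.1).map fun t =>
            C.coeff ((Quiver.Path.cons s.2.2 a).comp t.2.1) x * C.coeff t.2.2 y).sum).sum
        + ((pathSplits w).map fun s => ((pathSplits s.2.2).map fun t =>
            C.coeff t.2.1 x * C.coeff ((Quiver.Path.cons t.2.2 a).comp s.2.1) y).sum).sum := by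
    intro x y
    unfold Lsum
    rw [← lsum_add]
    refine congrArg List.sum (List.map_congr_left fun s hs => ?_)
    rw [C.coeff_mul]
    rw [sum_pathSplits_comp (Quiver.Path.cons s.2.2 a) s.2.1
      (fun u => C.coeff u.2.1 x * C.coeff u.2.2 y)]
    simp only [pathSplits, List.map_cons, List.sum_cons, List.map_map, Function.comp_def,
      Quiver.Path.nil_comp]
    try dsimp only
    ring
  have hswap : ∀ x y : C.A,
      ((pathSplits w).map fun s => ((pathSplits s.2.2).map fun t =>
        C.coeff t.2.1 x * C.coeff ((Quiver.Path.cons t.2.2 a).comp s.2.1) y).sum).sum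
    = ((pathSplits w).map fun s => ((pathSplits s.2.2).map fun t =>
        C.coeff ((Quiver.Path.cons t.2.2 a).comp s.2.1) y * C.coeff t.2.1 x).sum).sum :=
    fun x y => congrArg List.sum (List.map_congr_left fun s _ =>
      congrArg List.sum (List.map_congr_left fun t _ => mul_comm _ _))
  have h3 := sum_splits3 w (fun z =>
    C.coeff ((Quiver.Path.cons z.2.2.2.2 a).comp z.2.2.1) x * C.coeff z.2.2.2.1 y)
  have h4 := sum_splits3 w (fun z =>
    C.coeff ((Quiver.Path.cons z.2.2.2.2 a).comp z.2.2.1) y * C.coeff z.2.2.2.1 x)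
  dsimp only at h3 h4
  rw [key x y, key y x, h3, h4, hswap x y, hswap y x]
  ring

lemma Lsum_commCl (C : CompletePathAlgebra k V) {i j : V} (a : i ⟶ j)
    (w : Quiver.Path j i) {ξ : C.A} (hξ : ξ ∈ C.commCl) : Lsum C a w ξ = 0 := by
  have hmem : ξ ∈ C.commSub ⊔ C.mpow (w.length + 2) :=
    (Submodule.mem_iInf _).mp hξ (w.length + 2)
  obtain ⟨σ, hσ, ρ, hρ, rfl⟩ := Submodule.mem_sup.mp hmem
  rw [Lsum_add]
  have hσ0 : Lsum C a w σ = 0 := by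
    refine Submodule.span_induction (p := fun z _ => Lsum C a w z = 0) ?_ ?_ ?_ ?_ hσ
    · rintro z ⟨x, y, rfl⟩
      have : Lsum C a w (x * y - y * x) = Lsum C a w (x * y) - Lsum C a w (y * x) := by
        unfold Lsum
        rw [← lsum_sub]
        exact congrArg List.sum (List.map_congr_left fun s _ => map_sub _ _ _)
      rw [this, Lsum_mul_comm, sub_self]
    · exact Lsum_zero C a w
    · intro x y _ _ hx hy; rw [Lsum_add, hx, hy, add_zero]
    · intro r x _ hx; rw [Lsum_smul, hx, mul_zero]
  have hρ0 : Lsum C a w ρ = 0 := by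
    unfold Lsum
    rw [← lsum_zero (pathSplits w)]
    refine congrArg List.sum (List.map_congr_left fun s hs => ?_)
    refine hρ _ ?_
    have := pathSplits_length w s hs
    rw [Quiver.Path.length_comp, Quiver.Path.length_cons]
    omega
  rw [hσ0, hρ0, add_zero]

lemma coeff_cycDeriv (C : CompletePathAlgebra k V) {i j : V} (a : i ⟶ j) (φ : C.A)
    (q : Quiver.Path j i) : C.coeff q (C.cycDeriv a φ) = Lsum C a q φ := by
  unfold CompletePathAlgebra.cycDeriv
  rw [C.coeff_ofCoeff, dif_pos rfl, dif_pos rfl]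
  rw [eq_of_heq (cast_heq _ q)]
  rfl

lemma coeff_cycDeriv_ne (C : CompletePathAlgebra k V) {i j m m' : V} (a : i ⟶ j)
    (φ : C.A) (q : Quiver.Path m m') (h : ¬(m = j ∧ m' = i)) :
    C.coeff q (C.cycDeriv a φ) = 0 := by
  unfold CompletePathAlgebra.cycDeriv
  rw [C.coeff_ofCoeff]
  by_cases h1 : m = j
  · rw [dif_pos h1, dif_neg fun h2 => h ⟨h1, h2⟩]
  · rw [dif_neg h1]

lemma lsum_alg {α : Type*} (l : List α) (f : α → ℂ) :
    algebraMap ℂ ↥Entire (l.map f).sum = (l.map fun a => algebraMap ℂ ↥Entire (f a)).sum := by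
  induction l with
  | nil => simp
  | cons a l ih =>
    rw [List.map_cons, List.sum_cons, List.map_cons, List.sum_cons,
      (algebraMap ℂ ↥Entire).map_add, ih]

lemma coeff_cycDeriv_eq (C : CompletePathAlgebra ℂ V)
    (CK : CompletePathAlgebra (↥Entire) V) (ε : C.A →+* CK.A)
    (hε : ∀ (i j : V) (p : Quiver.Path i j) (x : C.A),
      CK.coeff p (ε x) = algebraMap ℂ ↥Entire (C.coeff p x))
    (φ : C.A) (θ : CK.A) (r : ℕ)
    (h2 : θ - ε φ ∈ CK.commCl ⊔ CK.mpow (r + 2))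
    {i j m m' : V} (a : i ⟶ j) (w : Quiver.Path m m') (hw : w.length ≤ r) :
    CK.coeff w (CK.cycDeriv a θ) = algebraMap ℂ ↥Entire (C.coeff w (C.cycDeriv a φ)) := by
  by_cases hm : m = j ∧ m' = i
  · obtain ⟨rfl, rfl⟩ := hm
    rw [coeff_cycDeriv, coeff_cycDeriv]
    obtain ⟨ξ, hξ, ρ, hρ, hsum⟩ := Submodule.mem_sup.mp h2
    have hθ : θ = ε φ + (ξ + ρ) := by rw [hsum]; abel
    rw [hθ, Lsum_add, Lsum_add, Lsum_commCl CK a w hξ]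
    have hρ0 : Lsum CK a w ρ = 0 := by
      unfold Lsum
      rw [← lsum_zero (pathSplits w)]
      refine congrArg List.sum (List.map_congr_left fun s hs => ?_)
      refine hρ _ ?_
      have := pathSplits_length w s hs
      rw [Quiver.Path.length_comp, Quiver.Path.length_cons]
      omega
    rw [hρ0, add_zero, add_zero]
    unfold Lsum
    have hmap : ((pathSplits w).map fun s =>
        CK.coeff ((Quiver.Path.cons s.2.2 a).comp s.2.1) (ε φ))
        = (pathSplits w).map fun s =>
          algebraMap ℂ ↥Entire (C.coeff ((Quiver.Path.cons s.2.2 a).comp s.2.1) φ) :=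
      List.map_congr_left fun s _ => hε _ _ _ _
    rw [hmap, lsum_alg]
  · rw [coeff_cycDeriv_ne CK a θ w hm, coeff_cycDeriv_ne C a φ w hm, map_zero]

lemma fsum_alg {ι : Type*} (s : Finset ι) (f : ι → ℂ) :
    algebraMap ℂ ↥Entire (∑ i ∈ s, f i) = ∑ i ∈ s, algebraMap ℂ ↥Entire (f i) := by
  classical
  induction s using Finset.induction with
  | empty => simp
  | insert _ _ h ih =>
    rw [Finset.sum_insert h, Finset.sum_insert h, (algebraMap ℂ ↥Entire).map_add, ih]

/-- The coefficient family over `ℂ` expressing `pathE p` as a value of a cyclic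
derivation, provided by the hypothesis `h1`. -/
def basefam (C : CompletePathAlgebra ℂ V) (φ : C.A) {α β : V} (p : Quiver.Path α β) :
    Cfam ℂ V :=
  if h : C.pathE p ∈ C.imCycPlus φ then h.choose else 0

lemma basefam_vanish (C : CompletePathAlgebra ℂ V) (φ : C.A) {α β : V}
    (p : Quiver.Path α β) : Vanish (basefam C φ p) := by
  unfold basefam
  split
  · next h => exact h.choose_spec.1
  · intro i j a s m u m' t v hu hv; rfl

lemma basefam_spec (C : CompletePathAlgebra ℂ V) (φ : C.A) {α β : V}
    (p : Quiver.Path α β) (h : C.pathE p ∈ C.imCycPlus φ) (s t : V) (q : Quiver.Path s t) :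
    C.coeff q (C.pathE p) = Fc (Gof C φ) (basefam C φ p) q := by
  unfold basefam
  rw [dif_pos h]
  exact h.choose_spec.2 s t q

/-- Base change of a coefficient family from `ℂ` to entire functions. -/
def algFam (c : Cfam ℂ V) : Cfam ↥Entire V :=
  fun i j a s m u m' t v => algebraMap ℂ ↥Entire (c i j a s m u m' t v)

lemma algFam_vanish (c : Cfam ℂ V) (hc : Vanish c) : Vanish (algFam c) := by
  intro i j a s m u m' t v hu hv
  unfold algFam
  rw [hc i j a s m u m' t v hu hv, (algebraMap ℂ ↥Entire).map_zero]

lemma Fc_algFam (C : CompletePathAlgebra ℂ V) (CK : CompletePathAlgebra (↥Entire) V)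
    (ε : C.A →+* CK.A)
    (hε : ∀ (i j : V) (p : Quiver.Path i j) (x : C.A),
      CK.coeff p (ε x) = algebraMap ℂ ↥Entire (C.coeff p x))
    (φ : C.A) (θ : CK.A) (r : ℕ)
    (h2 : θ - ε φ ∈ CK.commCl ⊔ CK.mpow (r + 2))
    (c : Cfam ℂ V) (hc : Vanish c) {s t : V} (q : Quiver.Path s t)
    (hq : q.length ≤ r + 1) :
    Fc (Gof CK θ) (algFam c) q = algebraMap ℂ ↥Entire (Fc (Gof C φ) c q) := by
  unfold Fc
  rw [lsum_alg]
  refine congrArg List.sum (List.map_congr_left fun s1 hs1 => ?_)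
  rw [lsum_alg]
  refine congrArg List.sum (List.map_congr_left fun s2 hs2 => ?_)
  rw [fsum_alg]
  refine Finset.sum_congr rfl fun i _ => ?_
  rw [fsum_alg]
  refine Finset.sum_congr rfl fun j _ => ?_
  rw [fsum_alg]
  refine Finset.sum_congr rfl fun a _ => ?_
  rw [(algebraMap ℂ ↥Entire).map_mul]
  by_cases hlen : s2.2.1.length ≤ r
  · unfold Gof algFam
    rw [coeff_cycDeriv_eq C CK ε hε φ θ r h2 a s2.2.1 hlen]
  · have l1 := pathSplits_length q s1 hs1
    have l2 := pathSplits_length s1.2.2 s2 hs2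
    have hu : s1.2.1.length = 0 := by omega
    have hv : s2.2.2.length = 0 := by omega
    unfold algFam
    rw [hc i j a s s1.1 s1.2.1 s2.1 t s2.2.2 hu hv, (algebraMap ℂ ↥Entire).map_zero,
      zero_mul, zero_mul]

/-- The stage-`kk` coefficient family in the successive-approximation scheme. -/
def Dstage (C : CompletePathAlgebra ℂ V) (φ : C.A) (r kk : ℕ)
    (R : ∀ s t : V, Quiver.Path s t → ↥Entire) : Cfam ↥Entire V :=
  ∑ P ∈ POLS V (r + 1 + kk),
    R P.1 P.2.1 P.2.2 •
      shiftP (takeDrop P.2.2 kk).2.2 (algFam (basefam C φ (takeDrop P.2.2 kk).2.1))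

/-- The successive remainders. -/
def Sseq (C : CompletePathAlgebra ℂ V) (CK : CompletePathAlgebra (↥Entire) V)
    (φ : C.A) (θ : CK.A) (x : CK.A) (r : ℕ) :
    ℕ → ∀ s t : V, Quiver.Path s t → ↥Entire
  | 0 => fun _ _ q => CK.coeff q x
  | kk + 1 => fun s t q =>
      Sseq C CK φ θ x r kk s t q
        - Fc (Gof CK θ) (Dstage C φ r kk (Sseq C CK φ θ x r kk)) q

lemma Dstage_support (C : CompletePathAlgebra ℂ V) (φ : C.A) (r kk : ℕ)
    (R : ∀ s t : V, Quiver.Path s t → ↥Entire) (i j : V) (a : i ⟶ j)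
    (s m : V) (u : Quiver.Path s m) (m' t : V) (v : Quiver.Path m' t)
    (hv : v.length < kk) :
    Dstage C φ r kk R i j a s m u m' t v = 0 := by
  unfold Dstage
  simp only [Finset.sum_apply, Pi.smul_apply, smul_eq_mul]
  refine Finset.sum_eq_zero fun P hP => ?_
  have hlenP : P.2.2.length = r + 1 + kk := (mem_POLS_iff _ P).mp hP
  have hw : (takeDrop P.2.2 kk).2.2.length = kk := takeDrop_len _ _ (by omega)
  rw [shiftP_support _ _ i j a s m u m' t v (by omega), mul_zero]

lemma Dstage_vanish (C : CompletePathAlgebra ℂ V) (φ : C.A) (r kk : ℕ)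
    (R : ∀ s t : V, Quiver.Path s t → ↥Entire) :
    Vanish (Dstage C φ r kk R) := by
  intro i j a s m u m' t v hu hv
  unfold Dstage
  simp only [Finset.sum_apply, Pi.smul_apply, smul_eq_mul]
  refine Finset.sum_eq_zero fun P hP => ?_
  rw [shiftP_vanish _ _ (algFam_vanish _ (basefam_vanish C φ _)) i j a s m u m' t v hu hv,
    mul_zero]

lemma Fc_Dstage (C : CompletePathAlgebra ℂ V) (CK : CompletePathAlgebra (↥Entire) V)
    (ε : C.A →+* CK.A)
    (hε : ∀ (i j : V) (p : Quiver.Path i j) (x : C.A),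
      CK.coeff p (ε x) = algebraMap ℂ ↥Entire (C.coeff p x))
    (φ : C.A) (θ : CK.A) (r : ℕ)
    (h1 : (C.mpow (r + 1) : Set C.A) ⊆ C.imCycPlus φ)
    (h2 : θ - ε φ ∈ CK.commCl ⊔ CK.mpow (r + 2)) (kk : ℕ)
    (R : ∀ s t : V, Quiver.Path s t → ↥Entire)
    (hR : ∀ (s t : V) (q : Quiver.Path s t), q.length < r + 1 + kk → R s t q = 0)
    {s t : V} (q : Quiver.Path s t) (hq : q.length ≤ r + 1 + kk) :
    Fc (Gof CK θ) (Dstage C φ r kk R) q = R s t q := by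
  have hmem : ∀ {α β : V} (p : Quiver.Path α β), p.length = r + 1 →
      C.pathE p ∈ C.imCycPlus φ := by
    intro α β p hp
    apply h1
    intro i' j' p' hp'
    rw [C.coeff_pathE, if_neg]
    intro hcon
    obtain ⟨rfl, rfl, h3'⟩ := sigma2_eq_elim hcon
    obtain rfl := eq_of_heq h3'
    omega
  have hterm : ∀ P ∈ POLS V (r + 1 + kk),
      Fc (Gof CK θ) (R P.1 P.2.1 P.2.2 •
          shiftP (takeDrop P.2.2 kk).2.2 (algFam (basefam C φ (takeDrop P.2.2 kk).2.1))) q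
      = if (⟨s, t, q⟩ : Σ a b : V, Quiver.Path a b) = P then R P.1 P.2.1 P.2.2 else 0 := by
    intro P hP
    obtain ⟨P1, P2, P3⟩ := P
    have hlenP : P3.length = r + 1 + kk := (mem_POLS_iff _ _).mp hP
    have hkk : kk ≤ P3.length := by omega
    have hw : (takeDrop P3 kk).2.2.length = kk := takeDrop_len _ _ hkk
    have hcomp : (takeDrop P3 kk).2.1.comp (takeDrop P3 kk).2.2 = P3 := takeDrop_comp _ _ hkk
    have hplen : (takeDrop P3 kk).2.1.length = r + 1 := by
      have := congrArg Quiver.Path.length hcomp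
      rw [Quiver.Path.length_comp] at this
      omega
    rw [Fc_smul]
    by_cases hex : ∃ q₀ : Quiver.Path s (takeDrop P3 kk).1,
        (⟨s, P2, q₀.comp (takeDrop P3 kk).2.2⟩ : Σ a b : V, Quiver.Path a b) = ⟨s, t, q⟩
    · obtain ⟨q₀, hq₀⟩ := hex
      obtain ⟨-, hteq, hh⟩ := sigma2_eq_elim hq₀
      subst hteq
      have hqe : q₀.comp (takeDrop P3 kk).2.2 = q := eq_of_heq hh
      subst hqe
      rw [Fc_shiftP_comp]
      have hq₀len : q₀.length ≤ r + 1 := by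
        rw [Quiver.Path.length_comp] at hq
        omega
      rw [Fc_algFam C CK ε hε φ θ r h2 _ (basefam_vanish C φ _) q₀ hq₀len,
        ← basefam_spec C φ _ (hmem _ hplen), C.coeff_pathE]
      by_cases hcond : (⟨P1, (takeDrop P3 kk).1, (takeDrop P3 kk).2.1⟩ :
          Σ a b : V, Quiver.Path a b) = ⟨s, (takeDrop P3 kk).1, q₀⟩
      · obtain ⟨rfl, -, hh'⟩ := sigma2_eq_elim hcond
        obtain rfl := eq_of_heq hh'
        rw [if_pos rfl, (algebraMap ℂ ↥Entire).map_one, mul_one, if_pos]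
        rw [hcomp]
      · rw [if_neg hcond, (algebraMap ℂ ↥Entire).map_zero, mul_zero, if_neg]
        intro hcon
        obtain ⟨h1', -, hh'⟩ := sigma2_eq_elim hcon
        subst h1'
        have : (takeDrop P3 kk).2.1.comp (takeDrop P3 kk).2.2
            = q₀.comp (takeDrop P3 kk).2.2 := by rw [hcomp, eq_of_heq hh']
        have heq0 : (takeDrop P3 kk).2.1 = q₀ := Quiver.Path.comp_injective_left _ this
        exact hcond (by rw [heq0])
    · have hne : Fc (Gof CK θ)
          (shiftP (takeDrop P3 kk).2.2 (algFam (basefam C φ (takeDrop P3 kk).2.1))) q = 0 := by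
        rcases Nat.eq_zero_or_pos kk with hkk0 | hkkpos
        · subst hkk0
          have htd : takeDrop P3 0 = ⟨P2, P3, Quiver.Path.nil⟩ := by cases P3 <;> rfl
          rw [htd] at hex ⊢
          rw [shiftP_nil,
            Fc_algFam C CK ε hε φ θ r h2 _ (basefam_vanish C φ _) q (by omega),
            ← basefam_spec C φ _ (hmem P3 (by simpa using hlenP)), C.coeff_pathE, if_neg,
            (algebraMap ℂ ↥Entire).map_zero]
          intro hcon
          obtain ⟨rfl, rfl, hh'⟩ := sigma2_eq_elim hcon
          obtain rfl := eq_of_heq hh'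
          exact hex ⟨P3, rfl⟩
        · refine Fc_shiftP_ne (Gof CK θ) _ (by omega) _ q fun q₀ hq₀ => hex ⟨q₀, hq₀⟩
      rw [hne, mul_zero, if_neg]
      intro hcon
      obtain ⟨rfl, rfl, hh'⟩ := sigma2_eq_elim hcon
      obtain rfl := eq_of_heq hh'
      exact hex ⟨_, by rw [hcomp]⟩
  unfold Dstage
  rw [Fc_finsum, Finset.sum_congr rfl hterm, Finset.sum_ite_eq]
  by_cases hql : q.length = r + 1 + kk
  · rw [if_pos ((mem_POLS_iff _ _).mpr hql)]
  · rw [if_neg fun hmem' => hql ((mem_POLS_iff _ _).mp hmem'), hR s t q (by omega)]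

lemma Sseq_zero (C : CompletePathAlgebra ℂ V) (CK : CompletePathAlgebra (↥Entire) V)
    (ε : C.A →+* CK.A)
    (hε : ∀ (i j : V) (p : Quiver.Path i j) (x : C.A),
      CK.coeff p (ε x) = algebraMap ℂ ↥Entire (C.coeff p x))
    (φ : C.A) (θ : CK.A) (x : CK.A) (r : ℕ)
    (h1 : (C.mpow (r + 1) : Set C.A) ⊆ C.imCycPlus φ)
    (h2 : θ - ε φ ∈ CK.commCl ⊔ CK.mpow (r + 2))
    (hx : x ∈ CK.mpow (r + 1)) :
    ∀ (kk : ℕ) (s t : V) (q : Quiver.Path s t), q.length < r + 1 + kk →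
      Sseq C CK φ θ x r kk s t q = 0 := by
  intro kk
  induction kk with
  | zero =>
    intro s t q hq
    show CK.coeff q x = 0
    exact hx q (by omega)
  | succ kk ih =>
    intro s t q hq
    show Sseq C CK φ θ x r kk s t q
        - Fc (Gof CK θ) (Dstage C φ r kk (Sseq C CK φ θ x r kk)) q = 0
    rw [Fc_Dstage C CK ε hε φ θ r h1 h2 kk _ ih q (by omega), sub_self]

end

end JetAux

set_option synthInstance.maxHeartbeats 1000000
set_option maxHeartbeats 1000000
/-- (Jet stability of the tangent-ideal condition.)  Let `Q`
be a finite quiver, `Φ` a potential of `ℂ̂Q` (representative `φ`) with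
`Φ_*(cDer⁺) ⊇ m̂^{r+1}`, and let `Θ` (representative `θ`) be a potential of the
complete path algebra over the ring `K` of entire functions on `ℂ` with the
same `(r+1)`-jet as `Φ`.  Then `Θ_*(cDer⁺) ⊇ n̂^{r+1}`, where `n̂` is the arrow
ideal over `K`. -/
theorem jet_stability_of_tangent_ideal
    {V : Type} [Quiver.{1} V] [Fintype V] [∀ i j : V, Fintype (i ⟶ j)]
    (C : CompletePathAlgebra ℂ V) (CK : CompletePathAlgebra (↥Entire) V)
    (ε : C.A →+* CK.A)
    (hε : ∀ (i j : V) (p : Quiver.Path i j) (x : C.A),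
      CK.coeff p (ε x) = algebraMap ℂ ↥Entire (C.coeff p x))
    (φ : C.A) (θ : CK.A) (r : ℕ)
    (h1 : (C.mpow (r + 1) : Set C.A) ⊆ C.imCycPlus φ)
    (h2 : θ - ε φ ∈ CK.commCl ⊔ CK.mpow (r + 2)) :
    (CK.mpow (r + 1) : Set CK.A) ⊆ CK.imCycPlus θ := by
  intro x hx
  refine (mem_imCycPlus_iff CK θ x).mpr
    ⟨fun i j a s m u m' t v => ∑ kk ∈ Finset.range (v.length + 1),
      Dstage C φ r kk (Sseq C CK φ θ x r kk) i j a s m u m' t v, ?_, ?_⟩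
  · intro i j a s m u m' t v hu hv
    exact Finset.sum_eq_zero fun kk _ =>
      Dstage_vanish C φ r kk _ i j a s m u m' t v hu hv
  · intro s t q
    have hstep : Fc (Gof CK θ) (fun i j a s' m u m' t' v =>
          ∑ kk ∈ Finset.range (v.length + 1),
            Dstage C φ r kk (Sseq C CK φ θ x r kk) i j a s' m u m' t' v) q
        = Fc (Gof CK θ)
            (∑ kk ∈ Finset.range (q.length + 1),
              Dstage C φ r kk (Sseq C CK φ θ x r kk)) q := by
      apply Fc_congr
      intro i j a s' m u m' t' v hv
      have happ : (∑ kk ∈ Finset.range (q.length + 1),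
            Dstage C φ r kk (Sseq C CK φ θ x r kk)) i j a s' m u m' t' v
          = ∑ kk ∈ Finset.range (q.length + 1),
            Dstage C φ r kk (Sseq C CK φ θ x r kk) i j a s' m u m' t' v := by
        simp [Finset.sum_apply]
      rw [happ]
      refine Finset.sum_subset (Finset.range_subset_range.mpr (by omega)) fun kk _ hnk => ?_
      refine Dstage_support C φ r kk _ i j a s' m u m' t' v ?_
      simp only [Finset.mem_range, not_lt] at hnk
      omega
    rw [hstep, Fc_finsum]
    have htel : ∀ kk ∈ Finset.range (q.length + 1),
        Fc (Gof CK θ) (Dstage C φ r kk (Sseq C CK φ θ x r kk)) q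
        = Sseq C CK φ θ x r kk s t q - Sseq C CK φ θ x r (kk + 1) s t q := by
      intro kk _
      show _ = Sseq C CK φ θ x r kk s t q - (Sseq C CK φ θ x r kk s t q
        - Fc (Gof CK θ) (Dstage C φ r kk (Sseq C CK φ θ x r kk)) q)
      ring
    rw [Finset.sum_congr rfl htel, Finset.sum_range_sub']
    rw [Sseq_zero C CK ε hε φ θ x r h1 h2 hx (q.length + 1) s t q (by omega), sub_zero]
    rfl
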